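/- For any real matrix W and its entrywise absolute value W̄, and any positive integer ℓ, if |(W^ℓ)_{hk}| < (W̄^ℓ)_{hk} for all entries (h,k), then the spectral radius satisfies ρ(W) < ρ(W̄). -/

import Mathlib

/-- The spectral radius of a real matrix. -/
noncomputable def specRad {n : ℕ} (M : Matrix (Fin n) (Fin n) ℝ) : ℝ :=
  sSup (abs '' spectrum ℝ M)

open Matrix in
/-- Conjugation commutes with powers. -/
lemma conj_pow_aux {n : ℕ} (U D : Matrix (Fin n) (Fin n) ℝ) (hU : U * star U = 1) (m : ℕ) :
    (U * D * star U) ^ m = U * D ^ m * star U := by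
  induction m with
  | zero => simpa using hU.symm
  | succ k ih =>
      rw [pow_succ, ih, pow_succ]
      have hU' : star U * U = 1 := mul_eq_one_comm.mp hU
      have : U * D ^ k * star U * (U * D * star U)
          = U * D ^ k * (star U * U) * (D * star U) := by noncomm_ring
      rw [this, hU', mul_one]
      noncomm_ring

open Matrix in
/-- If for some positive ℓ every entry satisfies |(W^ℓ)_{hk}| < (W̄^ℓ)_{hk},
then ρ(W) < ρ(W̄). -/
theorem entrywise_lt_spectral_radius {n : ℕ} (hn : 0 < n)
    (W : Matrix (Fin n) (Fin n) ℝ) (hW : W.IsSymm) (ℓ : ℕ) (hℓ : 0 < ℓ)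
    (h : ∀ h' k : Fin n, |(W ^ ℓ) h' k| < ((Matrix.of fun a b => |W a b|) ^ ℓ) h' k) :
    specRad W < specRad (Matrix.of fun a b => |W a b|) := by
  classical
  set A : Matrix (Fin n) (Fin n) ℝ := Matrix.of fun a b => |W a b| with hAdef
  have hWh : W.IsHermitian := by
    rwa [Matrix.IsHermitian, Matrix.conjTranspose_eq_transpose_of_trivial]
  have hAh : A.IsHermitian := by
    rw [Matrix.IsHermitian, Matrix.conjTranspose_eq_transpose_of_trivial]
    ext i j
    simp only [hAdef, Matrix.transpose_apply, Matrix.of_apply]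
    rw [← hW.apply i j]
  -- the spectrum of W
  have hspecW : spectrum ℝ W = Set.range hWh.eigenvalues :=
    hWh.spectrum_real_eq_range_eigenvalues
  have hfinW : (abs '' spectrum ℝ W).Finite := (W.finite_real_spectrum).image _
  have hneW : (abs '' spectrum ℝ W).Nonempty := by
    refine ⟨|hWh.eigenvalues ⟨0, hn⟩|, ⟨hWh.eigenvalues ⟨0, hn⟩, ?_, rfl⟩⟩
    exact hWh.eigenvalues_mem_spectrum_real _
  obtain ⟨M, hMmem, hMub⟩ := Set.exists_max_image _ id hfinW hneW
  have hMgr : IsGreatest (abs '' spectrum ℝ W) M := ⟨hMmem, fun b hb => hMub b hb⟩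
  have hspecRadW : specRad W = M := hMgr.csSup_eq
  obtain ⟨lam, hlam_mem, hlam_abs⟩ := hMmem
  rw [hspecW] at hlam_mem
  obtain ⟨i, hi⟩ := hlam_mem
  -- eigenvector
  set x := (⇑(hWh.eigenvectorBasis i) : Fin n → ℝ) with hxdef
  have hx : W *ᵥ x = lam • x := by
    rw [← hi]; exact hWh.mulVec_eigenvectorBasis i
  have hx0 : ∃ k, x k ≠ 0 := by
    by_contra hc
    push_neg at hc
    have : hWh.eigenvectorBasis i = 0 := by
      apply PiLp.ext; intro k; exact hc k
    exact hWh.eigenvectorBasis.orthonormal.ne_zero i this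
  obtain ⟨k0, hk0⟩ := hx0
  have hxpow : W ^ ℓ *ᵥ x = (lam ^ ℓ) • x := by
    clear hℓ h
    induction ℓ with
    | zero => simp
    | succ m ih =>
        rw [pow_succ, ← Matrix.mulVec_mulVec, hx, Matrix.mulVec_smul, ih, smul_smul, pow_succ']
  set y := (fun k => |x k| : Fin n → ℝ) with hydef
  have hy0 : ∀ k, 0 ≤ y k := fun k => abs_nonneg _
  have hyk0 : 0 < y k0 := abs_pos.mpr hk0
  -- key entrywise estimate
  have key : ∀ h' : Fin n, |lam| ^ ℓ * y h' < (A ^ ℓ *ᵥ y) h' := by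
    intro h'
    have e1 : |lam| ^ ℓ * y h' = |(W ^ ℓ *ᵥ x) h'| := by
      rw [hxpow]
      simp [hydef, abs_mul, abs_pow, Pi.smul_apply, smul_eq_mul]
    rw [e1]
    have e2 : (W ^ ℓ *ᵥ x) h' = ∑ k, (W ^ ℓ) h' k * x k := rfl
    have e3 : (A ^ ℓ *ᵥ y) h' = ∑ k, (A ^ ℓ) h' k * y k := rfl
    rw [e2, e3]
    calc |∑ k, (W ^ ℓ) h' k * x k| ≤ ∑ k, |(W ^ ℓ) h' k * x k| :=
          Finset.abs_sum_le_sum_abs _ _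
      _ = ∑ k, |(W ^ ℓ) h' k| * y k := by simp [hydef, abs_mul]
      _ < ∑ k, (A ^ ℓ) h' k * y k := by
          apply Finset.sum_lt_sum
          · intro k _
            exact mul_le_mul_of_nonneg_right (h h' k).le (hy0 k)
          · exact ⟨k0, Finset.mem_univ _, mul_lt_mul_of_pos_right (h h' k0) hyk0⟩
  -- spectral radius of A bounds eigenvalues of A
  set r := specRad A with hrdef
  have hAeig : ∀ j, |hAh.eigenvalues j| ≤ r := by
    intro j
    apply le_csSup ((A.finite_real_spectrum).image _).bddAbove
    exact ⟨hAh.eigenvalues j, hAh.eigenvalues_mem_spectrum_real j, rfl⟩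
  have hr0 : 0 ≤ r := le_trans (abs_nonneg _) (hAeig ⟨0, hn⟩)
  -- quadratic form bounds
  set s := y ⬝ᵥ y with hsdef
  have hs_pos : 0 < s := by
    rw [hsdef]
    apply Finset.sum_pos' (fun k _ => mul_self_nonneg (y k))
    exact ⟨k0, Finset.mem_univ _, mul_pos hyk0 hyk0⟩
  have q1 : |lam| ^ ℓ * s < y ⬝ᵥ (A ^ ℓ *ᵥ y) := by
    have : |lam| ^ ℓ * s = ∑ k, y k * (|lam| ^ ℓ * y k) := by
      rw [hsdef, dotProduct, Finset.mul_sum]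
      congr 1; funext k; ring
    rw [this, dotProduct]
    apply Finset.sum_lt_sum
    · intro k _
      exact mul_le_mul_of_nonneg_left (key k).le (hy0 k)
    · exact ⟨k0, Finset.mem_univ _, mul_lt_mul_of_pos_left (key k0) hyk0⟩
  -- spectral theorem for A
  set U := (hAh.eigenvectorUnitary : Matrix (Fin n) (Fin n) ℝ) with hUdef
  have hUU : U * star U = 1 := Matrix.mem_unitaryGroup_iff.mp hAh.eigenvectorUnitary.2
  have hD : A = U * Matrix.diagonal (RCLike.ofReal ∘ hAh.eigenvalues) * star U :=
    hAh.spectral_theorem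
  have hDr : A = U * Matrix.diagonal hAh.eigenvalues * star U := by
    convert hD using 3 <;> rfl
  have hApow : A ^ ℓ = U * Matrix.diagonal (fun j => hAh.eigenvalues j ^ ℓ) * star U := by
    conv_lhs => rw [hDr]
    rw [conj_pow_aux U _ hUU, Matrix.diagonal_pow]
    rfl
  set z := star U *ᵥ y with hzdef
  have hzy : U *ᵥ z = y := by
    rw [hzdef, Matrix.mulVec_mulVec, hUU, Matrix.one_mulVec]
  have hUt : star U = Uᵀ := by
    rw [Matrix.star_eq_conjTranspose, Matrix.conjTranspose_eq_transpose_of_trivial]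
  have hdot_swap : ∀ v w : Fin n → ℝ, v ⬝ᵥ (U *ᵥ w) = (star U *ᵥ v) ⬝ᵥ w := by
    intro v w
    rw [Matrix.dotProduct_mulVec, hUt, Matrix.mulVec_transpose]
  have hzz : z ⬝ᵥ z = s := by
    rw [hsdef, ← hzy, hdot_swap, Matrix.mulVec_mulVec, mul_eq_one_comm.mp hUU,
      Matrix.one_mulVec]
  have q2 : y ⬝ᵥ (A ^ ℓ *ᵥ y) ≤ r ^ ℓ * s := by
    have e : y ⬝ᵥ (A ^ ℓ *ᵥ y) = z ⬝ᵥ (Matrix.diagonal (fun j => hAh.eigenvalues j ^ ℓ) *ᵥ z) := by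
      rw [hApow, ← Matrix.mulVec_mulVec, ← Matrix.mulVec_mulVec, hdot_swap, ← hzdef]
    have e2 : z ⬝ᵥ (Matrix.diagonal (fun j => hAh.eigenvalues j ^ ℓ) *ᵥ z)
        = ∑ j, hAh.eigenvalues j ^ ℓ * (z j * z j) := by
      rw [dotProduct]
      congr 1; funext j
      rw [Matrix.mulVec_diagonal]
      ring
    have e3 : r ^ ℓ * (z ⬝ᵥ z) = ∑ j, r ^ ℓ * (z j * z j) := by
      rw [dotProduct, Finset.mul_sum]
    rw [e, e2, ← hzz, e3]
    apply Finset.sum_le_sum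
    intro j _
    apply mul_le_mul_of_nonneg_right _ (mul_self_nonneg (z j))
    calc hAh.eigenvalues j ^ ℓ ≤ |hAh.eigenvalues j ^ ℓ| := le_abs_self _
      _ = |hAh.eigenvalues j| ^ ℓ := by rw [abs_pow]
      _ ≤ r ^ ℓ := pow_le_pow_left₀ (abs_nonneg _) (hAeig j) ℓ
  -- combine
  have hpow_lt : |lam| ^ ℓ < r ^ ℓ := by
    have := lt_of_lt_of_le q1 q2
    exact lt_of_mul_lt_mul_right (by linarith [this]) hs_pos.le |>.trans_le le_rfl
  have hlt : |lam| < r := lt_of_pow_lt_pow_left₀ ℓ hr0 hpow_lt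
  rw [hspecRadW, ← hlam_abs]
  exact hlt
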